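/- Let a11 < 0, a22 < 0, a33 < 0, a12 < 0, a13 < 0, a24 > 0, a34 > 0 be real numbers satisfying a11² > a33² > -a13·a34 and a11² > a22² > -a12·a24. Then Ã2 := a22·a11³ + a33·a11³ + 2·a22²·a11² + 2·a33²·a11² - a12·a24·a11² + 4·a22·a33·a11² - a13·a34·a11² + a22³·a11 + a33³·a11 + 4·a22·a33²·a11 - a12·a22·a24·a11 + 4·a22²·a33·a11 + a12·a24·a33·a11 + a13·a22·a34·a11 - a13·a33·a34·a11 + a22·a33³ - a12²·a24² + 2·a22²·a33² + a12·a24·a33² - a13²·a34² - a12·a22²·a24 + a22³·a33 + a12·a22·a24·a33 + a13·a22²·a34 - a13·a33²·a34 - 2·a12·a13·a24·a34 + a13·a22·a33·a34 > 0. -/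
import Mathlib

lemma stmt_4_aux (a11 a22 a33 u v : ℝ)
    (h11 : a11 < 0) (h22 : a22 < 0) (h33 : a33 < 0)
    (hu : 0 < u) (hv : 0 < v)
    (h1 : a11^2 > a33^2) (h3 : a11^2 > a22^2)
    (hU : u < a22^2) (hV : v < a33^2) :
    (a11+a22)*(a11+a33)*(a22+a33)*(a11+a22+a33)
      + u*((a11+a22)^2 - a33^2 - (a11*a22+a11*a33+a22*a33))
      + v*((a11+a33)^2 - a22^2 - (a11*a22+a11*a33+a22*a33))
      - (u+v)^2 > 0 := by
  have s1 : a11 + a22 < 0 := by linarith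
  have s2 : a11 + a33 < 0 := by linarith
  have s3 : a22 + a33 < 0 := by linarith
  have s4 : a11 + a22 + a33 < 0 := by linarith
  have hP : 0 < (a11+a22)*(a11+a33)*(a22+a33)*(a11+a22+a33) := by
    have := mul_pos_of_neg_of_neg s1 s2
    have := mul_pos_of_neg_of_neg s3 s4
    nlinarith
  have dU : (0:ℝ) < a22^2 - u := by linarith
  have dV : (0:ℝ) < a33^2 - v := by linarith
  have d1 : (0:ℝ) < a11^2 - a33^2 := by linarith
  have d3 : (0:ℝ) < a11^2 - a22^2 := by linarith
  nlinarith [mul_pos hu hv, mul_pos dU dV,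
    mul_pos hu dV, mul_pos hv dU,
    mul_pos hu d1, mul_pos hu d3,
    mul_pos hv d1, mul_pos hv d3,
    mul_pos dU d1, mul_pos dV d3,
    mul_pos (mul_pos_of_neg_of_neg s1 s2) (mul_pos_of_neg_of_neg s3 s4),
    mul_pos hu (mul_pos_of_neg_of_neg s2 s3), mul_pos hv (mul_pos_of_neg_of_neg s1 s3),
    mul_pos hu (mul_pos_of_neg_of_neg s1 s4), mul_pos hv (mul_pos_of_neg_of_neg s2 s4),
    sq_nonneg (u-v), sq_nonneg (u+v), mul_pos_of_neg_of_neg h22 h33,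
    mul_pos_of_neg_of_neg h11 h22, mul_pos_of_neg_of_neg h11 h33]

theorem stmt_4 (a11 a22 a33 a12 a13 a24 a34 : ℝ)
    (h11 : a11 < 0) (h22 : a22 < 0) (h33 : a33 < 0)
    (h12 : a12 < 0) (h13 : a13 < 0) (h24 : a24 > 0) (h34 : a34 > 0)
    (h1 : a11^2 > a33^2) (h2 : a33^2 > -a13*a34)
    (h3 : a11^2 > a22^2) (h4 : a22^2 > -a12*a24) :
    a22*a11^3 + a33*a11^3 + 2*a22^2*a11^2 + 2*a33^2*a11^2 - a12*a24*a11^2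
      + 4*a22*a33*a11^2 - a13*a34*a11^2 + a22^3*a11 + a33^3*a11 + 4*a22*a33^2*a11
      - a12*a22*a24*a11 + 4*a22^2*a33*a11 + a12*a24*a33*a11 + a13*a22*a34*a11
      - a13*a33*a34*a11 + a22*a33^3 - a12^2*a24^2 + 2*a22^2*a33^2 + a12*a24*a33^2
      - a13^2*a34^2 - a12*a22^2*a24 + a22^3*a33 + a12*a22*a24*a33 + a13*a22^2*a34
      - a13*a33^2*a34 - 2*a12*a13*a24*a34 + a13*a22*a33*a34 > 0 := by
  have hu : (0:ℝ) < -(a12*a24) := by nlinarith [mul_neg_of_neg_of_pos h12 h24]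
  have hv : (0:ℝ) < -(a13*a34) := by nlinarith [mul_neg_of_neg_of_pos h13 h34]
  have hU : -(a12*a24) < a22^2 := by linarith
  have hV : -(a13*a34) < a33^2 := by linarith
  have key := stmt_4_aux a11 a22 a33 (-(a12*a24)) (-(a13*a34))
    h11 h22 h33 hu hv h1 h3 hU hV
  nlinarith [key]
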